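/- (Restriction of recession cones to finite-dimensional subspaces.) Let f_t ∈ Γ₀(X), t ∈ T, with f = sup_t f_t, ε > 0, x ∈ dom f, and L a finite-dimensional subspace containing x and all the domains dom f_t. Let g_t be the restriction of f_t to L. Then the sets A = ⋃_t ∂_ε f_t(x) ⊆ X* and B = ⋃_t ∂_ε g_t(x) ⊆ L* are nonempty, and every element of the recession cone of cl co(B) is the restriction to L of some element of the recession cone of cl co(A). -/

import Mathlib

open Set
open scoped RealInnerProductSpace Pointwise

noncomputable section

abbrev E (n : ℕ) := EuclideanSpace ℝ (Fin n)

/-- Recession cone with the convention `[∅]_∞ = {0}`. -/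
def recCone {X : Type*} [NormedAddCommGroup X] [InnerProductSpace ℝ X] (C : Set X) : Set X :=
  {d | (C = ∅ ∧ d = 0) ∨ (C.Nonempty ∧ ∀ a ∈ C, a + d ∈ C)}

/-- Closed convex hull. -/
def clco {X : Type*} [NormedAddCommGroup X] [InnerProductSpace ℝ X] (A : Set X) : Set X :=
  closure (convexHull ℝ A)

/-- ε-normal set to `C` at `x`. -/
def eNormal {X : Type*} [NormedAddCommGroup X] [InnerProductSpace ℝ X]
    (C : Set X) (x : X) (ε : ℝ) : Set X :=
  {v | ∀ y ∈ C, ⟪v, y - x⟫ ≤ ε}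

/-- ε-subdifferential of an extended-real-valued function, empty unless `f x` is finite. -/
def eSubdiff {X : Type*} [NormedAddCommGroup X] [InnerProductSpace ℝ X]
    (f : X → EReal) (x : X) (ε : ℝ) : Set X :=
  {v | (∃ r : ℝ, f x = (r : EReal)) ∧
    ∀ y, ((⟪v, y - x⟫ : ℝ) : EReal) + f x ≤ f y + (ε : EReal)}

/-- Convexity of an extended-real-valued function, via its epigraph. -/
def EpiConvex {X : Type*} [NormedAddCommGroup X] [InnerProductSpace ℝ X]
    (f : X → EReal) : Prop :=
  Convex ℝ {p : X × ℝ | f p.1 ≤ (p.2 : EReal)}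

/-- Properness of an extended-real-valued function. -/
def EProper {X : Type*} (f : X → EReal) : Prop :=
  (∀ y, f y ≠ ⊥) ∧ ∃ y, f y ≠ ⊤

/-- Lower semicontinuous (closed) hull: supremum of all lsc minorants. -/
def clHull {X : Type*} [TopologicalSpace X] (f : X → EReal) : X → EReal :=
  fun x => sSup {r : EReal | ∃ g : X → EReal, LowerSemicontinuous g ∧ g ≤ f ∧ g x = r}

open Classical in
/-- Indicator function with values in `EReal`. -/
def eInd {X : Type*} (C : Set X) (x : X) : EReal := if x ∈ C then 0 else ⊤

/-- Support function of a set. -/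
def suppFn {X : Type*} [NormedAddCommGroup X] [InnerProductSpace ℝ X]
    (A : Set X) (x : X) : EReal := ⨆ a ∈ A, ((⟪a, x⟫ : ℝ) : EReal)
section Aux

open InnerProductSpace

/-- Nonemptiness of the ε-subdifferential of a proper lsc convex function at a point of
its domain, for ε > 0, in a complete real inner product space. -/
lemma eSubdiff_nonempty_aux {X : Type*} [NormedAddCommGroup X] [InnerProductSpace ℝ X]
    [CompleteSpace X] {f : X → EReal} (hlsc : LowerSemicontinuous f)
    (hbot : ∀ y, f y ≠ ⊥) (hconv : EpiConvex f) {ε : ℝ} (hε : 0 < ε)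
    {x : X} (hx : f x ≠ ⊤) : (eSubdiff f x ε).Nonempty := by
  obtain ⟨r, hr⟩ : ∃ r : ℝ, f x = (r : EReal) := ⟨(f x).toReal, (EReal.coe_toReal hx (hbot x)).symm⟩
  set epi : Set (X × ℝ) := {p : X × ℝ | f p.1 ≤ (p.2 : EReal)} with hepidef
  have hcl : IsClosed epi := by
    have h1 := hlsc.isClosed_epigraph
    have h2 : epi = (fun p : X × ℝ => (p.1, (p.2 : EReal))) ⁻¹' {p : X × EReal | f p.1 ≤ p.2} :=
      rfl
    rw [h2]
    exact h1.preimage (continuous_fst.prodMk (continuous_coe_real_ereal.comp continuous_snd))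
  have hnm : (x, r - ε) ∉ epi := by
    simp only [hepidef, Set.mem_setOf_eq, hr, EReal.coe_le_coe_iff, not_le]
    linarith
  obtain ⟨φ, u, hxu, hb⟩ := geometric_hahn_banach_point_closed hconv hcl hnm
  set c : ℝ := φ (0, 1) with hc_def
  set ψ : X → ℝ := fun y => φ (y, 0) with hψ_def
  have key : ∀ (y : X) (s : ℝ), φ (y, s) = ψ y + s * c := by
    intro y s
    have h3 : (y, s) = (y, (0 : ℝ)) + s • ((0 : X), (1 : ℝ)) := by
      simp [Prod.ext_iff]
    rw [h3, map_add, map_smul]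
    simp [smul_eq_mul]
    rfl
  have hepi : ∀ (y : X) (s : ℝ), f y ≤ (s : EReal) → u < ψ y + s * c := by
    intro y s h
    have := hb (y, s) h
    rwa [key] at this
  have hφx : φ (x, r - ε) = ψ x + (r - ε) * c := key x (r - ε)
  rw [hφx] at hxu
  have hc : 0 < c := by
    rcases lt_trichotomy c 0 with h | h | h
    · exfalso
      have hs := hepi x (max r ((u - ψ x) / c)) (by
        rw [hr]; exact_mod_cast le_max_left _ _)
      have h1 : (u - ψ x) / c ≤ max r ((u - ψ x) / c) := le_max_right _ _
      have h2 : max r ((u - ψ x) / c) * c ≤ (u - ψ x) / c * c :=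
        mul_le_mul_of_nonpos_right h1 h.le
      rw [div_mul_cancel₀ _ h.ne] at h2
      linarith
    · exfalso
      have hs := hepi x r (le_of_eq hr)
      rw [h] at hs hxu
      simp only [mul_zero, add_zero] at hs hxu
      linarith
    · exact h
  set ψc : X →L[ℝ] ℝ := φ.comp (ContinuousLinearMap.inl ℝ X ℝ) with hψc_def
  set v : X := (InnerProductSpace.toDual ℝ X).symm ((-c⁻¹) • ψc) with hv_def
  have hv : ∀ y : X, ⟪v, y⟫ = -c⁻¹ * ψ y := by
    intro y
    rw [hv_def, InnerProductSpace.toDual_symm_apply]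
    simp [hψc_def, hψ_def, smul_eq_mul]
  refine ⟨v, ⟨r, hr⟩, fun y => ?_⟩
  rcases eq_or_ne (f y) ⊤ with hy | hy
  · rw [hy, EReal.top_add_coe]
    exact le_top
  · obtain ⟨s, hs⟩ : ∃ s : ℝ, f y = (s : EReal) := ⟨(f y).toReal, (EReal.coe_toReal hy (hbot y)).symm⟩
    have H := hepi y s (le_of_eq hs)
    have hinner : ⟪v, y - x⟫ = c⁻¹ * (ψ x - ψ y) := by
      rw [inner_sub_right, hv y, hv x]; ring
    have hreal : c⁻¹ * (ψ x - ψ y) + r ≤ s + ε := by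
      have h4 : ψ x - ψ y < (s + ε - r) * c := by nlinarith
      have h5 : c⁻¹ * (ψ x - ψ y) < c⁻¹ * ((s + ε - r) * c) :=
        mul_lt_mul_of_pos_left h4 (inv_pos.2 hc)
      rw [mul_comm (s + ε - r) c, inv_mul_cancel_left₀ hc.ne'] at h5
      linarith
    rw [hr, hs, hinner, ← EReal.coe_add, ← EReal.coe_add, EReal.coe_le_coe_iff]
    exact hreal

/-- Projecting an ε-subgradient onto `L` gives an ε-subgradient of the restriction. -/
lemma eSubdiff_proj_aux {n : ℕ} {L : Submodule ℝ (E n)} [CompleteSpace L]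
    {f : E n → EReal} {x : E n} (hxL : x ∈ L) {ε : ℝ} {v : E n}
    (hv : v ∈ eSubdiff f x ε) :
    (L.orthogonalProjectionOnto v : L) ∈ eSubdiff (fun y : L => f y) ⟨x, hxL⟩ ε := by
  obtain ⟨⟨r, hr⟩, hsub⟩ := hv
  refine ⟨⟨r, hr⟩, fun y => ?_⟩
  have hmem : v - (L.orthogonalProjectionOnto v : E n) ∈ Lᗮ :=
    Submodule.sub_starProjection_mem_orthogonal (K := L) v
  have hyx : ((y : E n) - x) ∈ L := sub_mem y.2 hxL
  have hzero : ⟪v - (L.orthogonalProjectionOnto v : E n), (y : E n) - x⟫ = 0 := by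
    rw [real_inner_comm]
    exact hmem _ hyx
  have hinner : ⟪(L.orthogonalProjectionOnto v : L), y - (⟨x, hxL⟩ : L)⟫
      = ⟪v, (y : E n) - x⟫ := by
    rw [Submodule.coe_inner]
    have h1 : ((y - (⟨x, hxL⟩ : L) : L) : E n) = (y : E n) - x := rfl
    rw [h1]
    rw [inner_sub_left] at hzero
    linarith
  rw [hinner]
  exact hsub (y : E n)

/-- Adding an element of `Lᗮ` to (the inclusion of) an ε-subgradient of the restriction
gives an ε-subgradient, when the domain lies in `L`. -/
lemma eSubdiff_incl_aux {n : ℕ} {L : Submodule ℝ (E n)} {f : E n → EReal} {x : E n}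
    (hxL : x ∈ L) (hdom : {y | f y ≠ ⊤} ⊆ (L : Set (E n))) {ε : ℝ} {w : L}
    (hw : w ∈ eSubdiff (fun y : L => f y) ⟨x, hxL⟩ ε) {u : E n} (hu : u ∈ Lᗮ) :
    (w : E n) + u ∈ eSubdiff f x ε := by
  obtain ⟨⟨r, hr⟩, hsub⟩ := hw
  refine ⟨⟨r, hr⟩, fun y => ?_⟩
  rcases eq_or_ne (f y) ⊤ with hy | hy
  · rw [hy, EReal.top_add_coe]
    exact le_top
  · have hyL : y ∈ L := hdom hy
    have hzero : ⟪u, y - x⟫ = 0 := by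
      rw [real_inner_comm]
      exact hu _ (sub_mem hyL hxL)
    have hinner : ⟪(w : E n) + u, y - x⟫ = ⟪w, (⟨y, hyL⟩ : L) - (⟨x, hxL⟩ : L)⟫ := by
      rw [inner_add_left, hzero, add_zero, Submodule.coe_inner]
      rfl
    rw [hinner]
    exact hsub ⟨y, hyL⟩

end Aux

/-- restriction of recession cones to finite-dimensional subspaces. -/
theorem stmt11 {n : ℕ} {T : Type*} [Nonempty T] (f : T → E n → EReal)
    (hlsc : ∀ t, LowerSemicontinuous (f t)) (hprop : ∀ t, EProper (f t))
    (hconv : ∀ t, EpiConvex (f t)) (ε : ℝ) (hε : 0 < ε)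
    (x : E n) (hx : (⨆ t, f t x) ≠ ⊤)
    (L : Submodule ℝ (E n)) (hL : FiniteDimensional ℝ L) (hxL : x ∈ L)
    (hdomL : ∀ t, {y | f t y ≠ ⊤} ⊆ (L : Set (E n))) :
    (⋃ t, eSubdiff (f t) x ε).Nonempty ∧
    (⋃ t, eSubdiff (fun y : L => f t y) ⟨x, hxL⟩ ε).Nonempty ∧
    ∀ w ∈ recCone (clco (⋃ t, eSubdiff (fun y : L => f t y) ⟨x, hxL⟩ ε)),
      ∃ v ∈ recCone (clco (⋃ t, eSubdiff (f t) x ε)),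
        ∀ l : L, ⟪v, (l : E n)⟫ = ⟪w, l⟫ := by
    classical
  haveI : CompleteSpace L := FiniteDimensional.complete ℝ L
  set B : Set L := ⋃ t, eSubdiff (fun y : L => f t y) ⟨x, hxL⟩ ε with hBdef
  set A : Set (E n) := ⋃ t, eSubdiff (f t) x ε with hAdef
  have hfx : ∀ t, f t x ≠ ⊤ := by
    intro t h
    exact hx (top_le_iff.1 (h ▸ le_iSup (fun t => f t x) t))
  obtain ⟨t0⟩ := ‹Nonempty T›
  obtain ⟨v0, hv0⟩ := eSubdiff_nonempty_aux (hlsc t0) (hprop t0).1 (hconv t0) hε (hfx t0)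
  have hAne : A.Nonempty := ⟨v0, Set.mem_iUnion.2 ⟨t0, hv0⟩⟩
  have hBne : B.Nonempty :=
    ⟨L.orthogonalProjectionOnto v0, Set.mem_iUnion.2 ⟨t0, eSubdiff_proj_aux hxL hv0⟩⟩
  have hsubclco : ∀ {Y : Type} [NormedAddCommGroup Y], ∀ [InnerProductSpace ℝ Y],
      ∀ S : Set Y, S ⊆ clco S := by
    intro Y _ _ S
    exact (subset_convexHull ℝ S).trans subset_closure
  have hclcoAconv : Convex ℝ (clco A) := (convex_convexHull ℝ A).closure
  have hclcoAcl : IsClosed (clco A) := isClosed_closure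
  refine ⟨hAne, hBne, ?_⟩
  intro w hw
  have hclcoBne : (clco B).Nonempty := hBne.mono (hsubclco B)
  have hw' : ∀ b ∈ clco B, b + w ∈ clco B := by
    rcases hw with ⟨hemp, _⟩ | ⟨_, h⟩
    · exact absurd hemp hclcoBne.ne_empty
    · exact h
  refine ⟨(w : E n), ?_, fun l => (Submodule.coe_inner L w l).symm⟩
  -- Step 1: for u ∈ Lᗮ, ι(clco B) + u ⊆ clco A
  have step1 : ∀ u ∈ Lᗮ, ∀ b ∈ clco B, ((b : E n) + u) ∈ clco A := by
    intro u hu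
    set S : Set L := {b : L | ((b : E n) + u) ∈ clco A} with hSdef
    have hScl : IsClosed S :=
      hclcoAcl.preimage (continuous_subtype_val.add continuous_const)
    have hSconv : Convex ℝ S := by
      intro a ha b hb θ σ hθ hσ hθσ
      have h1 := hclcoAconv ha hb hθ hσ hθσ
      have h2 : ((↑(θ • a + σ • b) : E n) + u) = θ • ((a : E n) + u) + σ • ((b : E n) + u) := by
        push_cast
        rw [smul_add, smul_add]
        rw [show θ • (a : E n) + θ • u + (σ • (b : E n) + σ • u)
            = θ • (a : E n) + σ • (b : E n) + (θ + σ) • u by rw [add_smul]; abel]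
        rw [hθσ, one_smul]
      show ((↑(θ • a + σ • b) : E n) + u) ∈ clco A
      rw [h2]
      exact h1
    have hBS : B ⊆ S := by
      intro b hb
      obtain ⟨t, hbt⟩ := Set.mem_iUnion.1 hb
      exact hsubclco A (Set.mem_iUnion.2 ⟨t, eSubdiff_incl_aux hxL (hdomL t) hbt hu⟩)
    intro b hb
    exact closure_minimal (convexHull_min hBS hSconv) hScl hb
  -- Step 2: A is stable under adding ↑w, inside clco A
  have step2 : ∀ a ∈ A, a + (w : E n) ∈ clco A := by
    intro a ha
    obtain ⟨t, hat⟩ := Set.mem_iUnion.1 ha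
    set b : L := L.orthogonalProjectionOnto a with hbdef
    have hb : b ∈ clco B := hsubclco B (Set.mem_iUnion.2 ⟨t, eSubdiff_proj_aux hxL hat⟩)
    have h1 := step1 (a - (b : E n)) (Submodule.sub_starProjection_mem_orthogonal (K := L) a)
      (b + w) (hw' b hb)
    have h2 : ((↑(b + w) : E n) + (a - (b : E n))) = a + (w : E n) := by
      push_cast; abel
    rwa [h2] at h1
  -- Step 3: extend to clco A
  have step3 : ∀ a ∈ clco A, a + (w : E n) ∈ clco A := by
    set S' : Set (E n) := {a : E n | a + (w : E n) ∈ clco A} with hS'def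
    have hS'cl : IsClosed S' := hclcoAcl.preimage (continuous_id.add continuous_const)
    have hS'conv : Convex ℝ S' := by
      intro a ha b hb θ σ hθ hσ hθσ
      have h1 := hclcoAconv ha hb hθ hσ hθσ
      show (θ • a + σ • b) + (w : E n) ∈ clco A
      rw [show (θ • a + σ • b) + (w : E n)
          = θ • (a + (w : E n)) + σ • (b + (w : E n)) by
        rw [smul_add, smul_add,
          show θ • a + θ • (w : E n) + (σ • b + σ • (w : E n))
            = θ • a + σ • b + (θ + σ) • (w : E n) by rw [add_smul]; abel, hθσ, one_smul]]
      exact h1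
    intro a ha
    exact closure_minimal (convexHull_min step2 hS'conv) hS'cl ha
  exact Or.inr ⟨hAne.mono (hsubclco A), step3⟩
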